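/- For every integer n ≥ 5, the energy of the circulant graph C^{1,2}_n equals 4·(D_{⌊n/6⌋}(2π/n) + D_{⌊n/6⌋}(4π/n)), where D_m(x) = sin((m+1/2)x)/sin(x/2) is the Dirichlet kernel. -/

import Mathlib

open Real Polynomial Finset Matrix

/-- The circulant graph `C^{1,γ}_n` on vertex set `ℤ/nℤ`: distinct vertices `u, v`
are adjacent iff `u - v ∈ {1, -1, γ, -γ}` (mod `n`). -/
def circGraph (n γ : ℕ) : SimpleGraph (ZMod n) :=
  SimpleGraph.circulantGraph ({1, (γ : ZMod n)} : Set (ZMod n))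

noncomputable instance (n γ : ℕ) : DecidableRel (circGraph n γ).Adj :=
  Classical.decRel _

/-- The adjacency matrix of a finite simple graph is Hermitian as a real matrix. -/
theorem adjMatrix_isHermitian {V : Type*} [Fintype V] [DecidableEq V]
    (G : SimpleGraph V) [DecidableRel G.Adj] : (G.adjMatrix ℝ).IsHermitian := by
  rw [Matrix.IsHermitian, Matrix.conjTranspose_eq_transpose_of_trivial]
  exact G.isSymm_adjMatrix

/-- The energy of a finite simple graph: the sum of the absolute values of the
eigenvalues (with multiplicity) of its adjacency matrix. -/
noncomputable def graphEnergy {V : Type*} [Fintype V] [DecidableEq V]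
    (G : SimpleGraph V) [DecidableRel G.Adj] : ℝ :=
  ∑ i, |(adjMatrix_isHermitian G).eigenvalues i|

/-- The Dirichlet kernel `D_m(x) = sin((m + 1/2)x) / sin(x/2)`. -/
noncomputable def DKern (m : ℕ) (x : ℝ) : ℝ :=
  Real.sin ((m + 1 / 2) * x) / Real.sin (x / 2)


variable {R : Type*} [CommRing R] {m : Type*} [Fintype m] [DecidableEq m]

lemma my_map_one' : ((1 : Matrix m m R).map (C : R → R[X])) = 1 :=
  Matrix.map_one _ (map_zero C) (map_one C)

lemma my_charmatrix_conj (P Q A : Matrix m m R) (hPQ : P * Q = 1) :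
    charmatrix (P * A * Q) = P.map C * charmatrix A * Q.map C := by
  have h1 : (P.map (C : R → R[X])) * Q.map C = 1 := by
    rw [← Matrix.map_mul (f := (C : R →+* R[X])), hPQ, my_map_one']
  unfold charmatrix
  rw [mul_sub, sub_mul, RingHom.mapMatrix_apply, RingHom.mapMatrix_apply,
    Matrix.map_mul (f := (C : R →+* R[X])), Matrix.map_mul (f := (C : R →+* R[X]))]
  congr 1
  rw [scalar_apply, ← Matrix.smul_one_eq_diagonal, mul_smul_comm, mul_one, smul_mul_assoc, h1]

lemma my_charpoly_conj (P Q A : Matrix m m R) (hPQ : P * Q = 1) :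
    (P * A * Q).charpoly = A.charpoly := by
  unfold Matrix.charpoly
  rw [my_charmatrix_conj P Q A hPQ, det_mul, det_mul]
  have : (P.map (C : R → R[X])).det * (Q.map C).det = 1 := by
    rw [← det_mul, ← Matrix.map_mul (f := (C : R →+* R[X])), hPQ, my_map_one', det_one]
  calc (P.map C).det * (charmatrix A).det * (Q.map C).det
      = (P.map C).det * (Q.map C).det * (charmatrix A).det := by ring
    _ = (charmatrix A).det := by rw [this, one_mul]

lemma my_charpoly_diagonal (d : m → R) : (diagonal d).charpoly = ∏ i, (X - C (d i)) := by
  unfold Matrix.charpoly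
  have : charmatrix (diagonal d) = diagonal fun i => X - C (d i) := by
    ext i j
    by_cases h : i = j
    · subst h; simp [charmatrix_apply, diagonal_apply_eq]
    · simp [charmatrix_apply, diagonal_apply_ne _ h]
  rw [this, det_diagonal]

lemma my_charpoly_hermitian (A : Matrix m m ℝ) (hA : A.IsHermitian) :
    A.charpoly = ∏ i, (X - C (hA.eigenvalues i)) := by
  have hU := hA.eigenvectorUnitary.2
  rw [Matrix.mem_unitaryGroup_iff] at hU
  have hU' := hA.eigenvectorUnitary.2
  rw [Matrix.mem_unitaryGroup_iff'] at hU'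
  conv_lhs => rw [hA.spectral_theorem, Unitary.conjStarAlgAut_apply]
  rw [my_charpoly_conj _ _ _ hU]
  · rw [RCLike.ofReal_real_eq_id]
    rw [show (id ∘ hA.eigenvalues) = hA.eigenvalues from rfl]
    exact my_charpoly_diagonal _

section CC
variable (n : ℕ) [NeZero n]

noncomputable def psi : AddChar (ZMod n) ℂ := ZMod.stdAddChar

lemma psi_sum_zero {c : ZMod n} (hc : c ≠ 0) : ∑ k : ZMod n, psi n (c * k) = 0 := by
  have h : (psi n).mulShift c ≠ 1 := ZMod.isPrimitive_stdAddChar n hc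
  simpa [AddChar.mulShift_apply] using AddChar.sum_eq_zero_of_ne_one h

noncomputable def Wm : Matrix (ZMod n) (ZMod n) ℂ := fun i k => psi n (i * k)
noncomputable def Wm' : Matrix (ZMod n) (ZMod n) ℂ := fun i k => psi n (-(i * k))

lemma hWW' : Wm n * Wm' n = (n : ℂ) • 1 := by
  ext i j
  simp only [Wm, Wm', Matrix.mul_apply, Matrix.smul_apply, Matrix.one_apply]
  have : ∀ k : ZMod n, psi n (i * k) * psi n (-(k * j)) = psi n ((i - j) * k) := by
    intro k
    rw [← AddChar.map_add_eq_mul]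
    congr 1
    ring
  rw [Finset.sum_congr rfl fun k _ => this k]
  by_cases h : i = j
  · simp [h, AddChar.map_zero_eq_one, Finset.card_univ]
  · rw [psi_sum_zero n (sub_ne_zero_of_ne h)]
    simp [h]

lemma hW'W : Wm' n * Wm n = (n : ℂ) • 1 := by
  ext i j
  simp only [Wm, Wm', Matrix.mul_apply, Matrix.smul_apply, Matrix.one_apply]
  have : ∀ k : ZMod n, psi n (-(i * k)) * psi n (k * j) = psi n ((j - i) * k) := by
    intro k
    rw [← AddChar.map_add_eq_mul]
    congr 1
    ring
  rw [Finset.sum_congr rfl fun k _ => this k]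
  by_cases h : i = j
  · simp [h, AddChar.map_zero_eq_one, Finset.card_univ]
  · rw [psi_sum_zero n (sub_ne_zero_of_ne (Ne.symm h))]
    simp [h]

noncomputable def Vm : Matrix (ZMod n) (ZMod n) ℂ := ((n : ℂ)⁻¹) • Wm' n

lemma hWV : Wm n * Vm n = 1 := by
  rw [Vm, Matrix.mul_smul, hWW', smul_smul, inv_mul_cancel₀ (Nat.cast_ne_zero.2 (NeZero.ne n)), one_smul]

lemma hVW : Vm n * Wm n = 1 := by
  rw [Vm, Matrix.smul_mul, hW'W, smul_smul, inv_mul_cancel₀ (Nat.cast_ne_zero.2 (NeZero.ne n)), one_smul]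

noncomputable def muC : ZMod n → ℂ :=
  fun k => psi n k + psi n (-k) + psi n (2 * k) + psi n (-(2 * k))

noncomputable def muR : ZMod n → ℝ :=
  fun k => 2 * Real.cos (2 * Real.pi * k.val / n) + 2 * Real.cos (4 * Real.pi * k.val / n)

lemma exp_pair (θ : ℝ) :
    Complex.exp ((θ:ℂ) * Complex.I) + Complex.exp (-(θ:ℂ) * Complex.I) = 2 * Complex.cos θ := by
  rw [Complex.cos]; ring

lemma muC_eq (k : ZMod n) : muC n k = ((muR n k : ℝ) : ℂ) := by
  have e1 : psi n k = Complex.exp (((2 * Real.pi * k.val / n : ℝ) : ℂ) * Complex.I) := by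
    rw [psi, ZMod.stdAddChar_apply, ZMod.toCircle_apply]
    congr 1; push_cast; ring
  have e2 : psi n (-k) = Complex.exp (-((2 * Real.pi * k.val / n : ℝ) : ℂ) * Complex.I) := by
    have hcast : ((-(k.val : ℤ) : ℤ) : ZMod n) = -k := by push_cast; rw [ZMod.natCast_zmod_val]
    rw [psi, ← hcast, ZMod.stdAddChar_coe]
    congr 1; push_cast; ring
  have e3 : psi n (2 * k) = Complex.exp (((4 * Real.pi * k.val / n : ℝ) : ℂ) * Complex.I) := by
    have hcast : (((2 * k.val : ℤ)) : ZMod n) = 2 * k := by push_cast; rw [ZMod.natCast_zmod_val]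
    rw [psi, ← hcast, ZMod.stdAddChar_coe]
    congr 1; push_cast; ring
  have e4 : psi n (-(2 * k)) = Complex.exp (-((4 * Real.pi * k.val / n : ℝ) : ℂ) * Complex.I) := by
    have hcast : (((-(2 * k.val) : ℤ)) : ZMod n) = -(2 * k) := by push_cast; rw [ZMod.natCast_zmod_val]
    rw [psi, ← hcast, ZMod.stdAddChar_coe]
    congr 1; push_cast; ring
  rw [muC, e1, e2, e3, e4]
  have p1 := exp_pair (2 * Real.pi * k.val / n)
  have p2 := exp_pair (4 * Real.pi * k.val / n)
  rw [muR]
  push_cast [Complex.ofReal_cos]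
  push_cast at p1 p2
  linear_combination p1 + p2

end CC

section Adj
variable (n : ℕ) [NeZero n] (hn : 5 ≤ n)

lemma nz_cast {a : ℕ} (ha : 0 < a) (han : a < n) : (a : ZMod n) ≠ 0 := by
  rw [Ne, ZMod.natCast_eq_zero_iff]
  exact fun h => absurd (Nat.le_of_dvd ha h) (not_le.2 han)

include hn in
lemma adj_iff (i j : ZMod n) :
    (circGraph n 2).Adj i j ↔ j = i + 1 ∨ j = i + 2 ∨ j = i - 1 ∨ j = i - 2 := by
  have h1 : (1 : ZMod n) ≠ 0 := by
    have := nz_cast n (a := 1) one_pos (by omega); simpa using this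
  have h2 : (2 : ZMod n) ≠ 0 := by
    have := nz_cast n (a := 2) two_pos (by omega); push_cast at this; exact this
  have hadj : (circGraph n 2).Adj i j ↔
      i ≠ j ∧ ((i - j = 1 ∨ i - j = 2) ∨ (j - i = 1 ∨ j - i = 2)) := by
    simp [circGraph, SimpleGraph.circulantGraph, SimpleGraph.fromRel_adj,
      Set.mem_insert_iff, Set.mem_singleton_iff]
  rw [hadj]
  constructor
  · rintro ⟨hne, (h | h) | (h | h)⟩
    · rw [sub_eq_iff_eq_add] at h
      right; right; left; rw [h]; ring
    · rw [sub_eq_iff_eq_add] at h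
      right; right; right; rw [h]; ring
    · rw [sub_eq_iff_eq_add] at h
      left; rw [h]; ring
    · rw [sub_eq_iff_eq_add] at h
      right; left; rw [h]; ring
  · rintro (rfl | rfl | rfl | rfl)
    · exact ⟨fun heq => h1 (add_eq_left.mp heq.symm), Or.inr (Or.inl (by ring))⟩
    · exact ⟨fun heq => h2 (add_eq_left.mp heq.symm), Or.inr (Or.inr (by ring))⟩
    · exact ⟨fun heq => h1 (sub_eq_self.mp heq.symm), Or.inl (Or.inl (by ring))⟩
    · exact ⟨fun heq => h2 (sub_eq_self.mp heq.symm), Or.inl (Or.inr (by ring))⟩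
end Adj

section BW
variable (n : ℕ) [NeZero n] (hn : 5 ≤ n)

include hn in
lemma hBW : (circGraph n 2).adjMatrix ℂ * Wm n = Wm n * diagonal (muC n) := by
  have h1 : (1 : ZMod n) ≠ 0 := by
    have := nz_cast n (a := 1) one_pos (by omega); simpa using this
  have h2 : (2 : ZMod n) ≠ 0 := by
    have := nz_cast n (a := 2) two_pos (by omega); push_cast at this; exact this
  have h3 : (3 : ZMod n) ≠ 0 := by
    have := nz_cast n (a := 3) (by omega) (by omega); push_cast at this; exact this
  have h4 : (4 : ZMod n) ≠ 0 := by
    have := nz_cast n (a := 4) (by omega) (by omega); push_cast at this; exact this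
  ext i k
  rw [Matrix.mul_diagonal, Matrix.mul_apply]
  have step : ∀ j, (circGraph n 2).adjMatrix ℂ i j * Wm n j k =
      if j ∈ ({i+1, i+2, i-1, i-2} : Finset (ZMod n)) then Wm n j k else 0 := by
    intro j
    rw [SimpleGraph.adjMatrix_apply, ite_mul, one_mul, zero_mul]
    refine if_congr ?_ rfl rfl
    rw [adj_iff n hn]
    simp [Finset.mem_insert, Finset.mem_singleton]
  rw [Finset.sum_congr rfl fun j _ => step j, Finset.sum_ite_mem, Finset.univ_inter]
  have d1 : i+1 ≠ i+2 := sub_ne_zero.mp (by rw [show (i+1)-(i+2) = -1 by ring]; exact neg_ne_zero.mpr h1)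
  have d2 : i+1 ≠ i-1 := sub_ne_zero.mp (by rw [show (i+1)-(i-1) = 2 by ring]; exact h2)
  have d3 : i+1 ≠ i-2 := sub_ne_zero.mp (by rw [show (i+1)-(i-2) = 3 by ring]; exact h3)
  have d4 : i+2 ≠ i-1 := sub_ne_zero.mp (by rw [show (i+2)-(i-1) = 3 by ring]; exact h3)
  have d5 : i+2 ≠ i-2 := sub_ne_zero.mp (by rw [show (i+2)-(i-2) = 4 by ring]; exact h4)
  have d6 : i-1 ≠ i-2 := sub_ne_zero.mp (by rw [show (i-1)-(i-2) = 1 by ring]; exact h1)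
  rw [show ({i+1, i+2, i-1, i-2} : Finset (ZMod n)) =
      insert (i+1) (insert (i+2) (insert (i-1) ({i-2} : Finset (ZMod n)))) from rfl]
  rw [Finset.sum_insert (by simp [d1, d2, d3]), Finset.sum_insert (by simp [d4, d5]),
    Finset.sum_insert (by simp [d6]), Finset.sum_singleton]
  have e1 : Wm n (i+1) k = Wm n i k * psi n k := by
    rw [Wm, Wm, ← AddChar.map_add_eq_mul]; congr 1; ring
  have e2 : Wm n (i+2) k = Wm n i k * psi n (2*k) := by
    rw [Wm, Wm, ← AddChar.map_add_eq_mul]; congr 1; ring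
  have e3 : Wm n (i-1) k = Wm n i k * psi n (-k) := by
    rw [Wm, Wm, ← AddChar.map_add_eq_mul]; congr 1; ring
  have e4 : Wm n (i-2) k = Wm n i k * psi n (-(2*k)) := by
    rw [Wm, Wm, ← AddChar.map_add_eq_mul]; congr 1; ring
  rw [e1, e2, e3, e4, muC]
  ring

lemma adjC_eq_map : (circGraph n 2).adjMatrix ℂ =
    ((circGraph n 2).adjMatrix ℝ).map (Complex.ofRealHom : ℝ →+* ℂ) := by
  ext i j
  simp [SimpleGraph.adjMatrix_apply, Matrix.map_apply, apply_ite (⇑(Complex.ofRealHom : ℝ →+* ℂ))]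

include hn in
lemma charpoly_adjC : ((circGraph n 2).adjMatrix ℂ).charpoly = ∏ k, (X - C (muC n k)) := by
  have hB : (circGraph n 2).adjMatrix ℂ = Wm n * diagonal (muC n) * Vm n := by
    calc (circGraph n 2).adjMatrix ℂ
        = (circGraph n 2).adjMatrix ℂ * (Wm n * Vm n) := by rw [hWV n, mul_one]
      _ = ((circGraph n 2).adjMatrix ℂ * Wm n) * Vm n := (mul_assoc _ _ _).symm
      _ = Wm n * diagonal (muC n) * Vm n := by rw [hBW n hn]
  rw [hB, my_charpoly_conj _ _ _ (hWV n), my_charpoly_diagonal]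
end BW

section MS
variable (n : ℕ) [NeZero n] (hn : 5 ≤ n)

include hn in
lemma hms : Multiset.map (adjMatrix_isHermitian (circGraph n 2)).eigenvalues univ.val
    = Multiset.map (muR n) univ.val := by
  set ev := (adjMatrix_isHermitian (circGraph n 2)).eigenvalues with hev
  have hpoly : (∏ i : ZMod n, (X - C ((ev i : ℝ) : ℂ)))
      = ∏ k : ZMod n, (X - C ((muR n k : ℝ) : ℂ)) := by
    have h1 : Polynomial.map (Complex.ofRealHom) (((circGraph n 2).adjMatrix ℝ).charpoly)
        = ∏ i : ZMod n, (X - C ((ev i : ℝ) : ℂ)) := by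
      rw [my_charpoly_hermitian _ (adjMatrix_isHermitian (circGraph n 2)), Polynomial.map_prod]
      simp [Polynomial.map_sub]
      rfl
    have h2 : Polynomial.map (Complex.ofRealHom) (((circGraph n 2).adjMatrix ℝ).charpoly)
        = ∏ k : ZMod n, (X - C ((muR n k : ℝ) : ℂ)) := by
      rw [← Matrix.charpoly_map, ← adjC_eq_map n, charpoly_adjC n hn]
      exact Finset.prod_congr rfl fun k _ => by rw [muC_eq]
    rw [← h1, h2]
  have h3 := congrArg Polynomial.roots hpoly
  rw [Finset.prod_eq_multiset_prod, Finset.prod_eq_multiset_prod,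
    show (Multiset.map (fun i => X - C ((ev i : ℝ) : ℂ)) univ.val)
      = Multiset.map (fun a => X - C a) (Multiset.map (fun i => ((ev i : ℝ):ℂ)) univ.val)
      from by rw [Multiset.map_map]; rfl,
    show (Multiset.map (fun k => X - C ((muR n k : ℝ) : ℂ)) univ.val)
      = Multiset.map (fun a => X - C a) (Multiset.map (fun k => ((muR n k : ℝ):ℂ)) univ.val)
      from by rw [Multiset.map_map]; rfl,
    roots_multiset_prod_X_sub_C, roots_multiset_prod_X_sub_C] at h3
  have h4 : Multiset.map (fun x : ℝ => (x : ℂ)) (Multiset.map ev univ.val)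
      = Multiset.map (fun x : ℝ => (x : ℂ)) (Multiset.map (muR n) univ.val) := by
    rw [Multiset.map_map, Multiset.map_map]; exact h3
  exact Multiset.map_injective Complex.ofReal_injective h4

include hn in
lemma sum_F (F : ℝ → ℝ) :
    ∑ i : ZMod n, F ((adjMatrix_isHermitian (circGraph n 2)).eigenvalues i)
      = ∑ k : ZMod n, F (muR n k) := by
  have h : Multiset.map (F ∘ (adjMatrix_isHermitian (circGraph n 2)).eigenvalues) univ.val
      = Multiset.map (F ∘ muR n) univ.val := by
    rw [← Multiset.map_map, ← Multiset.map_map, hms n hn]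
  calc ∑ i : ZMod n, F ((adjMatrix_isHermitian (circGraph n 2)).eigenvalues i)
      = (Multiset.map (F ∘ (adjMatrix_isHermitian (circGraph n 2)).eigenvalues) univ.val).sum := rfl
    _ = (Multiset.map (F ∘ muR n) univ.val).sum := by rw [h]
    _ = ∑ k : ZMod n, F (muR n k) := rfl

include hn in
lemma sum_muR_zero : ∑ k : ZMod n, muR n k = 0 := by
  have h1 : (1 : ZMod n) ≠ 0 := by
    have := nz_cast n (a := 1) one_pos (by omega); simpa using this
  have h2 : (2 : ZMod n) ≠ 0 := by
    have := nz_cast n (a := 2) two_pos (by omega); push_cast at this; exact this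
  have hC : ∑ k : ZMod n, muC n k = 0 := by
    have e : ∀ k : ZMod n, muC n k
        = psi n (1*k) + psi n ((-1)*k) + psi n (2*k) + psi n ((-2)*k) := by
      intro k
      rw [muC, one_mul, show ((-1 : ZMod n))*k = -k by ring, show ((-2:ZMod n))*k = -(2*k) by ring]
    rw [Finset.sum_congr rfl fun k _ => e k, Finset.sum_add_distrib, Finset.sum_add_distrib,
      Finset.sum_add_distrib, psi_sum_zero n h1, psi_sum_zero n (neg_ne_zero.mpr h1),
      psi_sum_zero n h2, psi_sum_zero n (neg_ne_zero.mpr h2)]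
    norm_num
  have h0 : ((∑ k : ZMod n, muR n k : ℝ) : ℂ) = 0 := by
    push_cast
    rw [Finset.sum_congr rfl fun k _ => (muC_eq n k).symm]
    exact hC
  exact_mod_cast h0
end MS

noncomputable def gfun (n j : ℕ) : ℝ :=
  2 * Real.cos (2 * π * j / n) + 2 * Real.cos (4 * π * j / n)

lemma dirichlet (m : ℕ) (x : ℝ) (hx : Real.sin (x/2) ≠ 0) :
    DKern m x = 1 + 2 * ∑ j ∈ range m, Real.cos (((j:ℝ)+1)*x) := by
  have aux : ∀ m : ℕ, Real.sin (((m:ℝ) + 1/2)*x)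
      = (1 + 2*∑ j ∈ range m, Real.cos (((j:ℝ)+1)*x)) * Real.sin (x/2) := by
    intro m
    induction m with
    | zero =>
      rw [show ((0:ℕ):ℝ) + 1/2 = 1/2 by norm_num]
      rw [show (1/2 : ℝ)*x = x/2 by ring]
      simp
    | succ m ih =>
      rw [Finset.sum_range_succ]
      have key : Real.sin ((((m:ℝ)+1)+1/2)*x)
          = Real.sin (((m:ℝ)+1/2)*x) + 2*Real.cos (((m:ℝ)+1)*x)*Real.sin (x/2) := by
        have a1 : (((m:ℝ)+1)+1/2)*x = ((m:ℝ)+1)*x + x/2 := by ring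
        have a2 : ((m:ℝ)+1/2)*x = ((m:ℝ)+1)*x - x/2 := by ring
        rw [a1, a2, Real.sin_add, Real.sin_sub]; ring
      push_cast
      rw [key, ih]
      ring
  rw [DKern, aux m, mul_div_cancel_right₀ _ hx]

lemma analytic0 (n : ℕ) (hn : 5 ≤ n) (hz : ∑ j ∈ range n, gfun n j = 0)
    (m : ℕ) (h6m : 6*m ≤ n) (h6m' : n < 6*m+6) :
    ∑ j ∈ range n, |gfun n j| = 4 * (DKern m (2*π/n) + DKern m (4*π/n)) := by
  have hnR : (0:ℝ) < n := by exact_mod_cast Nat.pos_of_ne_zero (by omega)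
  have hπ := Real.pi_pos
  have hn5 : (5:ℝ) ≤ n := by exact_mod_cast hn
  have hcos : ∀ j : ℕ, gfun n j = 2*(2*Real.cos (2*π*j/n) - 1)*(Real.cos (2*π*j/n) + 1) := by
    intro j
    rw [gfun, show (4*π*(j:ℝ)/n) = 2*(2*π*j/n) by ring, Real.cos_two_mul]; ring
  have key_pos : ∀ j : ℕ, 6*j ≤ n → 0 ≤ gfun n j := by
    intro j hj
    have hjR : (6*(j:ℝ)) ≤ n := by exact_mod_cast hj
    have hθ0 : 0 ≤ 2*π*j/n := by positivity
    have hθ : 2*π*j/n ≤ π/3 := by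
      rw [div_le_div_iff₀ hnR (by norm_num : (0:ℝ)<3)]
      nlinarith
    have hc : 1/2 ≤ Real.cos (2*π*j/n) := by
      have := Real.cos_le_cos_of_nonneg_of_le_pi hθ0 (by linarith) hθ
      rwa [Real.cos_pi_div_three] at this
    rw [hcos j]
    nlinarith [Real.neg_one_le_cos (2*π*(j:ℝ)/n)]
  have key_neg : ∀ j : ℕ, n < 6*j → 6*j < 5*n → gfun n j ≤ 0 := by
    intro j h1 h2
    have h1R : (n:ℝ) < 6*j := by exact_mod_cast h1
    have h2R : (6*(j:ℝ)) < 5*n := by exact_mod_cast h2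
    have hθ1 : π/3 ≤ 2*π*j/n := by
      rw [le_div_iff₀ hnR]
      nlinarith
    have hθ2 : 2*π*j/n ≤ 5*π/3 := by
      rw [div_le_iff₀ hnR]
      nlinarith
    have hc : Real.cos (2*π*j/n) ≤ 1/2 := by
      rcases le_total (2*π*j/n) π with h | h
      · have := Real.cos_le_cos_of_nonneg_of_le_pi (by positivity : (0:ℝ) ≤ π/3) h hθ1
        rwa [Real.cos_pi_div_three] at this
      · rw [← Real.cos_two_pi_sub]
        have := Real.cos_le_cos_of_nonneg_of_le_pi (by positivity : (0:ℝ) ≤ π/3)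
          (by linarith : 2*π - 2*π*j/n ≤ π) (by linarith : π/3 ≤ 2*π - 2*π*j/n)
        rwa [Real.cos_pi_div_three] at this
    rw [hcos j]
    nlinarith [Real.neg_one_le_cos (2*π*(j:ℝ)/n)]
  have hrefl : ∀ j : ℕ, j ≤ n → gfun n j = gfun n (n-j) := by
    intro j hj
    have hc : ((n-j:ℕ):ℝ) = (n:ℝ) - j := by
      push_cast [hj]; ring
    rw [gfun, gfun, hc]
    have e1 : 2*π*((n:ℝ)-j)/n = 2*π - 2*π*j/n := by field_simp
    have e2 : 4*π*((n:ℝ)-j)/n = (-(4*π*j/n) + 2*π) + 2*π := by field_simp; ring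
    rw [e1, e2, Real.cos_two_pi_sub, Real.cos_add_two_pi, Real.cos_add_two_pi, Real.cos_neg]
  have habs : ∀ x : ℝ, |x| = 2*max x 0 - x := by
    intro x
    rcases le_total x 0 with h|h
    · rw [abs_of_nonpos h, max_eq_right h]; ring
    · rw [abs_of_nonneg h, max_eq_left h]; ring
  -- sum split
  have hm1n : m+1 ≤ n-m := by omega
  have hnmn : n-m ≤ n := by omega
  have hsum : ∑ j ∈ range n, |gfun n j| = 2 * ∑ j ∈ range n, max (gfun n j) 0 := by
    rw [Finset.sum_congr rfl fun j _ => habs (gfun n j), Finset.sum_sub_distrib, hz,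
      ← Finset.mul_sum]
    ring
  have hsplit : ∑ j ∈ range n, max (gfun n j) 0
      = (∑ j ∈ Ico 0 (m+1), max (gfun n j) 0) + (∑ j ∈ Ico (m+1) (n-m), max (gfun n j) 0)
        + (∑ j ∈ Ico (n-m) n, max (gfun n j) 0) := by
    rw [Finset.range_eq_Ico, ← Finset.sum_Ico_consecutive _ (Nat.zero_le (m+1)) (by omega : m+1 ≤ n),
      ← Finset.sum_Ico_consecutive _ hm1n hnmn]
    ring
  have p1 : ∑ j ∈ Ico 0 (m+1), max (gfun n j) 0 = gfun n 0 + ∑ j ∈ Ico 1 (m+1), gfun n j := by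
    have : ∀ j ∈ Ico 0 (m+1), max (gfun n j) 0 = gfun n j := by
      intro j hj
      rw [Finset.mem_Ico] at hj
      exact max_eq_left (key_pos j (by omega))
    rw [Finset.sum_congr rfl this,
      ← Finset.sum_Ico_consecutive _ (Nat.zero_le 1) (by omega : 1 ≤ m+1)]
    congr 1
    rw [show Ico 0 1 = range 1 from by rw [Finset.range_eq_Ico], Finset.sum_range_one]
  have p2 : ∑ j ∈ Ico (m+1) (n-m), max (gfun n j) 0 = 0 := by
    apply Finset.sum_eq_zero
    intro j hj
    rw [Finset.mem_Ico] at hj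
    exact max_eq_right (key_neg j (by omega) (by omega))
  have p3 : ∑ j ∈ Ico (n-m) n, max (gfun n j) 0 = ∑ j ∈ Ico 1 (m+1), gfun n j := by
    have hval : ∀ j ∈ Ico (n-m) n, max (gfun n j) 0 = gfun n (n-j) := by
      intro j hj
      rw [Finset.mem_Ico] at hj
      rw [hrefl j (by omega)]
      exact max_eq_left (key_pos (n-j) (by omega))
    rw [Finset.sum_congr rfl hval]
    refine Finset.sum_nbij' (fun j => n - j) (fun i => n - i) ?_ ?_ ?_ ?_ ?_
    · intro a ha; simp only [Finset.mem_Ico] at ha ⊢; omega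
    · intro a ha; simp only [Finset.mem_Ico] at ha ⊢; omega
    · intro a ha; simp only [Finset.mem_Ico] at ha; beta_reduce; omega
    · intro a ha; simp only [Finset.mem_Ico] at ha; beta_reduce; omega
    · intro a ha; rfl
  have hg0 : gfun n 0 = 4 := by
    rw [gfun]
    norm_num
  -- RHS
  have hππ : π/n < π := by
    rw [div_lt_iff₀ hnR]
    nlinarith
  have hsin1 : Real.sin ((2*π/n)/2) ≠ 0 := by
    have h : (2*π/n)/2 = π/n := by ring
    rw [h]
    exact ne_of_gt (Real.sin_pos_of_pos_of_lt_pi (by positivity) hππ)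
  have hsin2 : Real.sin ((4*π/n)/2) ≠ 0 := by
    have h : (4*π/n)/2 = 2*π/n := by ring
    rw [h]
    refine ne_of_gt (Real.sin_pos_of_pos_of_lt_pi (by positivity) ?_)
    rw [div_lt_iff₀ hnR]
    nlinarith
  rw [hsum, hsplit, p1, p2, p3, hg0, dirichlet m _ hsin1, dirichlet m _ hsin2]
  have hS : ∑ j ∈ Ico 1 (m+1), gfun n j
      = ∑ j ∈ range m, (2*Real.cos (((j:ℝ)+1)*(2*π/n)) + 2*Real.cos (((j:ℝ)+1)*(4*π/n))) := by
    rw [Finset.sum_Ico_eq_sum_range]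
    simp only [Nat.add_sub_cancel]
    refine Finset.sum_congr rfl fun j _ => ?_
    rw [gfun, show 2*π*((1+j:ℕ):ℝ)/n = ((j:ℝ)+1)*(2*π/n) by push_cast; ring,
      show 4*π*((1+j:ℕ):ℝ)/n = ((j:ℝ)+1)*(4*π/n) by push_cast; ring]
  rw [hS, Finset.sum_add_distrib, ← Finset.mul_sum, ← Finset.mul_sum]
  ring

lemma analytic (n : ℕ) (hn : 5 ≤ n) (hz : ∑ j ∈ range n, gfun n j = 0) :
    ∑ j ∈ range n, |gfun n j| = 4 * (DKern (n/6) (2*π/n) + DKern (n/6) (4*π/n)) := by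
  refine analytic0 n hn hz (n/6) ?_ ?_
  · have := Nat.div_mul_le_self n 6; omega
  · have h1 := Nat.div_add_mod n 6
    have h2 : n % 6 < 6 := Nat.mod_lt n (by norm_num)
    omega

lemma zmod_sum_eq (n : ℕ) [NeZero n] (f : ℕ → ℝ) :
    ∑ k : ZMod n, f k.val = ∑ j ∈ range n, f j := by
  refine Finset.sum_nbij' (fun k => k.val) (fun j => ((j : ℕ) : ZMod n)) ?_ ?_ ?_ ?_ ?_
  · intro k _; simp [Finset.mem_range, ZMod.val_lt]
  · intro j _; simp
  · intro k _; simp [ZMod.natCast_zmod_val]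
  · intro j hj; simp only [Finset.mem_range] at hj; simp [ZMod.val_cast_of_lt hj]
  · intro k _; rfl

/-- For every integer `n ≥ 5`, the energy of the circulant graph `C^{1,2}_n` equals
`4 (D_{⌊n/6⌋}(2π/n) + D_{⌊n/6⌋}(4π/n))`. -/
theorem energy_circulant_one_two (n : ℕ) [NeZero n] (hn : 5 ≤ n) :
    graphEnergy (circGraph n 2) =
      4 * (DKern (n / 6) (2 * π / n) + DKern (n / 6) (4 * π / n)) := by

  have hz : ∑ j ∈ range n, gfun n j = 0 := by
    rw [← zmod_sum_eq n (gfun n)]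
    exact sum_muR_zero n hn
  have h1 : graphEnergy (circGraph n 2) = ∑ k : ZMod n, |muR n k| := by
    rw [graphEnergy]
    exact sum_F n hn (fun x => |x|)
  have h2 : ∑ k : ZMod n, |muR n k| = ∑ j ∈ range n, |gfun n j| :=
    zmod_sum_eq n (fun j => |gfun n j|)
  rw [h1, h2]
  exact analytic n hn hz
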